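/- ℂ[u] is a Harish-Chandra subalgebra of D(q): for every a ∈ D(q), the subspace ℂ[u]·a·ℂ[u] of D(q) is finitely generated both as a left ℂ[u]-module and as a right ℂ[u]-module. -/

import Mathlib

noncomputable section

open Polynomial

namespace KleinD

/-- The three generators of the free algebra. -/
def U : FreeAlgebra ℂ (Fin 3) := FreeAlgebra.ι ℂ 0
def V : FreeAlgebra ℂ (Fin 3) := FreeAlgebra.ι ℂ 1
def W : FreeAlgebra ℂ (Fin 3) := FreeAlgebra.ι ℂ 2

/-- ρ = 2 q(-1/2). -/
def rho (q : ℂ[X]) : ℂ := 2 * q.eval (-(1/2 : ℂ))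

/-- The condition that p₀, p₁ satisfy `(1+2t)² (p₀(t²) + p₁(t²) t) = -4 q(t) q(-t-1) + ρ²`. -/
def pCond (q p₀ p₁ : ℂ[X]) : Prop :=
  (1 + 2 * X) ^ 2 * (p₀.comp (X ^ 2) + p₁.comp (X ^ 2) * X)
    = -4 * q * q.comp (-X - 1) + C (rho q) ^ 2

/-- The defining relations of `D(q)`. -/
inductive DqRel (q p₀ p₁ : ℂ[X]) : FreeAlgebra ℂ (Fin 3) → FreeAlgebra ℂ (Fin 3) → Prop
  | rel1 : DqRel q p₀ p₁ (U * V - V * U) (2 * W + V)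
  | rel2 : DqRel q p₀ p₁ (U * W - W * U)
      (2 * V * U + W + algebraMap ℂ (FreeAlgebra ℂ (Fin 3)) (rho q))
  | rel3 : DqRel q p₀ p₁ (V * W - W * V) (-(V * V) - Polynomial.aeval U p₁)
  | rel4 : DqRel q p₀ p₁ (W * W)
      (V * V * U + V * W + algebraMap ℂ (FreeAlgebra ℂ (Fin 3)) (rho q) * V
        + Polynomial.aeval U p₀)

/-- The noncommutative type D Kleinian singularity `D(q)`. -/
abbrev Dq (q p₀ p₁ : ℂ[X]) := RingQuot (DqRel q p₀ p₁)

def uD (q p₀ p₁ : ℂ[X]) : Dq q p₀ p₁ := RingQuot.mkAlgHom ℂ (DqRel q p₀ p₁) U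
def vD (q p₀ p₁ : ℂ[X]) : Dq q p₀ p₁ := RingQuot.mkAlgHom ℂ (DqRel q p₀ p₁) V
def wD (q p₀ p₁ : ℂ[X]) : Dq q p₀ p₁ := RingQuot.mkAlgHom ℂ (DqRel q p₀ p₁) W

/-- `ℂ(x)`, the field of rational functions. -/
abbrev L := RatFunc ℂ

/-- `x ∈ ℂ(x)`. -/
def xL : L := RatFunc.X

/-- The ℂ-algebra automorphism `τ` of ℂ(x), determined by `x ↦ -x`. -/
def tauL : L ≃ₐ[ℂ] L :=
  IsFractionRing.algEquivOfAlgEquiv (Polynomial.algEquivAevalNegX (R := ℂ))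

/-- The ℂ-algebra automorphism `δ` of ℂ(x), determined by `x ↦ x - 1`. -/
def deltaL : L ≃ₐ[ℂ] L :=
  IsFractionRing.algEquivOfAlgEquiv (Polynomial.algEquivAevalXAddC (-1 : ℂ))

/-- Left multiplication by a rational function, as a ℂ-linear endomorphism of ℂ(x). -/
def mulE (f : L) : Module.End ℂ L := Algebra.lmul ℂ L f

/-- `δ` as an endomorphism: `g(x) ↦ g(x-1)`. -/
def deltaE : Module.End ℂ L := deltaL.toLinearMap
/-- `δ⁻¹` as an endomorphism: `g(x) ↦ g(x+1)`. -/
def deltaInvE : Module.End ℂ L := deltaL.symm.toLinearMap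
/-- `τ` as an endomorphism: `g(x) ↦ g(-x)`. -/
def tauE : Module.End ℂ L := tauL.toLinearMap

/-- The skew group algebra `ℂ(x)#ℤ`, realized (via its faithful action on `ℂ(x)`) as the
subalgebra of `End_ℂ(ℂ(x))` generated by all multiplication operators `f·` together with
the shift automorphisms `δ` and `δ⁻¹`; its elements are exactly the finite sums
`Σ fₖ δᵏ`. -/
def CxZ : Subalgebra ℂ (Module.End ℂ L) :=
  Algebra.adjoin ℂ (Set.range mulE ∪ {deltaE, deltaInvE})

/-- `q(x) ∈ ℂ(x)` for a polynomial `q`. -/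
def pol (q : ℂ[X]) : L := algebraMap ℂ[X] L q

/-- The constant rational function `c`. -/
def cst (c : ℂ) : L := algebraMap ℂ L c

/-- The image of `φ(u) = x²`. -/
def phiU : Module.End ℂ L := mulE (xL ^ 2)

/-- The prescribed value of `φ(-v-w)`. -/
def phiMVW (q : ℂ[X]) : Module.End ℂ L :=
  (1/2 : ℂ) • (mulE (pol q / (cst (1/2) + xL)) * deltaInvE
    + mulE (tauL (pol q) / (cst (1/2) - xL)) * deltaE
    - mulE (cst (q.eval (-(1/2 : ℂ))) / ((cst (1/2) + xL) * (cst (1/2) - xL))))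

/-- The prescribed value of `φ(-(1/2)v-w)`. -/
def phiMHVW (q : ℂ[X]) : Module.End ℂ L :=
  (1/2 : ℂ) • (mulE (pol q / xL) * deltaInvE - mulE (tauL (pol q) / xL) * deltaE)

end KleinD

namespace KleinD

variable {A : Type} [Ring A] [Algebra ℂ A]

/-- The set `Γ·a·Γ` of finite sums `Σ γᵢ a γᵢ'` with `γᵢ, γᵢ' ∈ Γ` (as `ℂ ⊆ Γ`, this is
the ℂ-span of the products `γ a γ'`). -/
def biSpan (Γ : Subalgebra ℂ A) (a : A) : Set A :=
  (Submodule.span ℂ {y : A | ∃ g₁ ∈ Γ, ∃ g₂ ∈ Γ, y = g₁ * a * g₂} : Set A)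

/-- The left `Γ`-submodule of `A` generated by a set `s`: finite sums `Σ γᵢ xᵢ`. -/
def leftSpan (Γ : Subalgebra ℂ A) (s : Set A) : Set A :=
  (Submodule.span ℂ {y : A | ∃ g ∈ Γ, ∃ x ∈ s, y = g * x} : Set A)

/-- The right `Γ`-submodule of `A` generated by a set `s`: finite sums `Σ xᵢ γᵢ`. -/
def rightSpan (Γ : Subalgebra ℂ A) (s : Set A) : Set A :=
  (Submodule.span ℂ {y : A | ∃ g ∈ Γ, ∃ x ∈ s, y = x * g} : Set A)

/-- `Γ` is a Harish-Chandra subalgebra of `A` if, for every `a ∈ A`, the `Γ`-bimodule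
`Γ·a·Γ` is finitely generated as a left `Γ`-module and as a right `Γ`-module. -/
def IsHarishChandraSubalgebra (Γ : Subalgebra ℂ A) : Prop :=
  ∀ a : A,
    (∃ S : Finset A, ↑S ⊆ biSpan Γ a ∧ biSpan Γ a = leftSpan Γ ↑S) ∧
    (∃ S : Finset A, ↑S ⊆ biSpan Γ a ∧ biSpan Γ a = rightSpan Γ ↑S)

end KleinD


section HCmain
set_option linter.unusedSectionVars false
set_option linter.unusedVariables false
set_option linter.unnecessarySimpa false
namespace HCProof
open KleinD


variable {A : Type} [Ring A] [Algebra ℂ A]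

/-- letters -/
def ltr (v w : A) : Bool → A := fun b => bif b then w else v

/-- words in v, w -/
def wd (v w : A) (l : List Bool) : A := (l.map (ltr v w)).prod

lemma wd_nil (v w : A) : wd v w [] = 1 := rfl

lemma wd_append (v w : A) (l l' : List Bool) :
    wd v w (l ++ l') = wd v w l * wd v w l' := by
  simp [wd, List.prod_append]

lemma wd_cons (v w : A) (b : Bool) (l : List Bool) :
    wd v w (b :: l) = ltr v w b * wd v w l := by
  simp [wd]

lemma wd_singleton (v w : A) (b : Bool) : wd v w [b] = ltr v w b := by
  simp [wd]

/-- the filtration -/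
def NN (u v w : A) (n : ℕ) : Submodule ℂ A :=
  Submodule.span ℂ {x | ∃ p : ℂ[X], ∃ l : List Bool, l.length ≤ n ∧ x = aeval u p * wd v w l}

lemma NN_mono {u v w : A} {n m : ℕ} (h : n ≤ m) : NN u v w n ≤ NN u v w m :=
  Submodule.span_mono (fun x ⟨p, l, hl, hx⟩ => ⟨p, l, hl.trans h, hx⟩)

lemma wd_mem {u v w : A} {n : ℕ} {l : List Bool} (h : l.length ≤ n) :
    wd v w l ∈ NN u v w n :=
  Submodule.subset_span ⟨1, l, h, by simp⟩

lemma aeval_mul_mem {u v w : A} {n : ℕ} (p : ℂ[X]) {x : A} (hx : x ∈ NN u v w n) :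
    aeval u p * x ∈ NN u v w n := by
  induction hx using Submodule.span_induction with
  | mem x h =>
    obtain ⟨q, l, hl, rfl⟩ := h
    exact Submodule.subset_span ⟨p * q, l, hl, by rw [map_mul, mul_assoc]⟩
  | zero => simpa using (NN u v w n).zero_mem
  | add x y _ _ hx hy => rw [mul_add]; exact add_mem hx hy
  | smul c x _ hx => rw [mul_smul_comm]; exact Submodule.smul_mem _ _ hx

lemma mul_ltr_mem {u v w : A} {n : ℕ} (b : Bool) {x : A} (hx : x ∈ NN u v w n) :
    x * ltr v w b ∈ NN u v w (n + 1) := by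
  induction hx using Submodule.span_induction with
  | mem x h =>
    obtain ⟨q, l, hl, rfl⟩ := h
    refine Submodule.subset_span ⟨q, l ++ [b], by simpa using Nat.add_le_add_right hl 1, ?_⟩
    rw [wd_append, wd_singleton, mul_assoc]
  | zero => simpa using (NN u v w (n+1)).zero_mem
  | add x y _ _ hx hy => rw [add_mul]; exact add_mem hx hy
  | smul c x _ hx => rw [smul_mul_assoc]; exact Submodule.smul_mem _ _ hx

section rel
variable {u v w : A}
  (hvu : v * u ∈ Submodule.span ℂ ({u * v, u * w, v, w, 1} : Set A))
  (hwu : w * u ∈ Submodule.span ℂ ({u * v, u * w, v, w, 1} : Set A))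

include hvu hwu in
lemma wd_mul_u_mem (l : List Bool) : wd v w l * u ∈ NN u v w l.length := by
  induction l using List.reverseRecOn with
  | nil =>
    simp only [wd_nil, one_mul, List.length_nil]
    exact Submodule.subset_span ⟨X, [], le_refl 0, by simp [wd_nil]⟩
  | append_singleton l b ih =>
    rw [wd_append, wd_singleton, mul_assoc]
    have hb : ltr v w b * u ∈ Submodule.span ℂ ({u * v, u * w, v, w, 1} : Set A) := by
      cases b
      · simpa [ltr] using hvu
      · simpa [ltr] using hwu
    have hmap : wd v w l * (ltr v w b * u) ∈
        Submodule.map (LinearMap.mulLeft ℂ (wd v w l))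
          (Submodule.span ℂ ({u * v, u * w, v, w, 1} : Set A)) :=
      Submodule.mem_map_of_mem hb
    rw [Submodule.map_span] at hmap
    refine Submodule.span_le.mpr ?_ hmap
    rintro y ⟨g, hg, rfl⟩
    simp only [Set.mem_insert_iff, Set.mem_singleton_iff] at hg
    have hlen : l.length + 1 = (l ++ [b]).length := by simp
    rcases hg with h | h | h | h | h <;> rw [LinearMap.mulLeft_apply, h, ← hlen]
    · have : wd v w l * (u * v) = (wd v w l * u) * ltr v w false := by
        simp [ltr, mul_assoc]
      rw [this]
      exact mul_ltr_mem false ih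
    · have : wd v w l * (u * w) = (wd v w l * u) * ltr v w true := by
        simp [ltr, mul_assoc]
      rw [this]
      exact mul_ltr_mem true ih
    · exact mul_ltr_mem false (wd_mem le_rfl)
    · exact mul_ltr_mem true (wd_mem le_rfl)
    · rw [mul_one]
      exact wd_mem (by simp)

include hvu hwu in
lemma mul_u_mem {n : ℕ} {x : A} (hx : x ∈ NN u v w n) : x * u ∈ NN u v w n := by
  induction hx using Submodule.span_induction with
  | mem x h =>
    obtain ⟨q, l, hl, rfl⟩ := h
    rw [mul_assoc]
    exact aeval_mul_mem q (NN_mono hl (wd_mul_u_mem hvu hwu l))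
  | zero => simpa using (NN u v w n).zero_mem
  | add x y _ _ hx hy => rw [add_mul]; exact add_mem hx hy
  | smul c x _ hx => rw [smul_mul_assoc]; exact Submodule.smul_mem _ _ hx

include hvu hwu in
lemma mul_aeval_mem {n : ℕ} (p : ℂ[X]) {x : A} (hx : x ∈ NN u v w n) :
    x * aeval u p ∈ NN u v w n := by
  induction p using Polynomial.induction_on with
  | C a =>
    rw [aeval_C, ← Algebra.commutes a x, ← Algebra.smul_def]
    exact Submodule.smul_mem _ _ hx
  | add p q hp hq => rw [map_add, mul_add]; exact add_mem hp hq
  | monomial m a ih =>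
    have : aeval u (C a * X ^ (m + 1)) = aeval u (C a * X ^ m) * u := by
      rw [map_mul, map_mul, map_pow, map_pow, aeval_X, pow_succ, mul_assoc]
    rw [this, ← mul_assoc]
    exact mul_u_mem hvu hwu ih

include hvu hwu in
lemma mul_wd_mem {n : ℕ} {x : A} (hx : x ∈ NN u v w n) (l : List Bool) :
    x * wd v w l ∈ NN u v w (n + l.length) := by
  induction l generalizing x n with
  | nil => simpa [wd_nil] using hx
  | cons b l ih =>
    rw [wd_cons, ← mul_assoc]
    have := ih (mul_ltr_mem b hx)
    rw [show n + 1 + l.length = n + (b :: l).length by simp; omega] at this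
    exact this

include hvu hwu in
lemma mul_mem_NN {m k : ℕ} {x y : A} (hx : x ∈ NN u v w m) (hy : y ∈ NN u v w k) :
    x * y ∈ NN u v w (m + k) := by
  induction hy using Submodule.span_induction with
  | mem y h =>
    obtain ⟨q, l, hl, rfl⟩ := h
    rw [← mul_assoc]
    exact NN_mono (by omega) (mul_wd_mem hvu hwu (mul_aeval_mem hvu hwu q hx) l)
  | zero => simpa using (NN u v w (m+k)).zero_mem
  | add x y _ _ hx hy => rw [mul_add]; exact add_mem hx hy
  | smul c x _ hx => rw [mul_smul_comm]; exact Submodule.smul_mem _ _ hx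

include hvu hwu in
lemma exists_mem_NN {a : A} (ha : a ∈ Algebra.adjoin ℂ ({u, v, w} : Set A)) :
    ∃ n, a ∈ NN u v w n := by
  induction ha using Algebra.adjoin_induction with
  | mem x hx =>
    rcases hx with rfl | rfl | rfl
    · exact ⟨0, Submodule.subset_span ⟨X, [], le_rfl, by simp [wd_nil]⟩⟩
    · exact ⟨1, Submodule.subset_span ⟨1, [false], by simp, by simp [wd_singleton, ltr]⟩⟩
    · exact ⟨1, Submodule.subset_span ⟨1, [true], by simp, by simp [wd_singleton, ltr]⟩⟩
  | algebraMap r =>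
    exact ⟨0, Submodule.subset_span ⟨C r, [], le_rfl, by simp [wd_nil]⟩⟩
  | add x y _ _ hx hy =>
    obtain ⟨n, hn⟩ := hx; obtain ⟨m, hm⟩ := hy
    exact ⟨max n m, add_mem (NN_mono (le_max_left _ _) hn) (NN_mono (le_max_right _ _) hm)⟩
  | mul x y _ _ hx hy =>
    obtain ⟨n, hn⟩ := hx; obtain ⟨m, hm⟩ := hy
    exact ⟨n + m, mul_mem_NN hvu hwu hn hm⟩

end rel


section main
variable {A : Type} [Ring A] [Algebra ℂ A]

/-- The main left-sided lemma. -/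
theorem left_fg (u v w : A)
    (hgen : ∀ a : A, a ∈ Algebra.adjoin ℂ ({u, v, w} : Set A))
    (hvu : v * u ∈ Submodule.span ℂ ({u * v, u * w, v, w, 1} : Set A))
    (hwu : w * u ∈ Submodule.span ℂ ({u * v, u * w, v, w, 1} : Set A)) (a : A) :
    ∃ S : Finset A, ↑S ⊆ biSpan (Algebra.adjoin ℂ {u}) a ∧
      biSpan (Algebra.adjoin ℂ {u}) a = leftSpan (Algebra.adjoin ℂ {u}) ↑S := by
  letI : Module ℂ[X] A := Module.compHom A (aeval u).toRingHom
  have hsmul : ∀ (p : ℂ[X]) (x : A), p • x = aeval u p * x := fun p x => rfl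
  have hsmulC : ∀ (c : ℂ) (x : A), c • x = (C c : ℂ[X]) • x := by
    intro c x
    rw [hsmul, aeval_C, Algebra.smul_def]
  set Γ := Algebra.adjoin ℂ ({u} : Set A) with hΓdef
  have hΓ : ∀ g, g ∈ Γ ↔ ∃ p : ℂ[X], aeval u p = g := by
    intro g
    rw [hΓdef, Algebra.adjoin_singleton_eq_range_aeval]
    exact Iff.rfl
  obtain ⟨n, han⟩ := exists_mem_NN hvu hwu (hgen a)
  set NL : Submodule ℂ[X] A := Submodule.span ℂ[X] (wd v w '' {l | l.length ≤ n}) with hNLdef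
  have hNL : ∀ x, x ∈ NL → x ∈ NN u v w n := by
    intro x hx
    induction hx using Submodule.span_induction with
    | mem x h => obtain ⟨l, hl, rfl⟩ := h; exact wd_mem hl
    | zero => exact zero_mem _
    | add x y _ _ hx hy => exact add_mem hx hy
    | smul p x _ hx => rw [hsmul]; exact aeval_mul_mem p hx
  have hNL' : ∀ x, x ∈ NN u v w n → x ∈ NL := by
    intro x hx
    induction hx using Submodule.span_induction with
    | mem x h =>
      obtain ⟨p, l, hl, rfl⟩ := h
      rw [← hsmul]
      exact Submodule.smul_mem _ _ (Submodule.subset_span ⟨l, hl, rfl⟩)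
    | zero => exact zero_mem _
    | add x y _ _ hx hy => exact add_mem hx hy
    | smul c x _ hx => rw [hsmulC]; exact Submodule.smul_mem _ _ hx
  have hNLfg : NL.FG := by
    rw [Submodule.fg_def]
    exact ⟨_, Set.Finite.image _ (List.finite_length_le Bool n), rfl⟩
  set T : Submodule ℂ[X] A := Submodule.span ℂ[X] {y | ∃ g ∈ Γ, y = a * g} with hTdef
  have hTle : T ≤ NL := by
    rw [hTdef, Submodule.span_le]
    rintro y ⟨g, hg, rfl⟩
    obtain ⟨p, rfl⟩ := (hΓ g).mp hg
    exact hNL' _ (mul_aeval_mem hvu hwu p han)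
  have hTfg : T.FG := by
    haveI := isNoetherian_of_fg_of_noetherian NL hNLfg
    have h1 : (Submodule.comap NL.subtype T).FG := IsNoetherian.noetherian _
    have h2 := h1.map NL.subtype
    rwa [Submodule.map_comap_subtype, inf_eq_right.mpr hTle] at h2
  obtain ⟨S, hS⟩ := hTfg
  -- biSpan is stable under left multiplication by Γ
  have hstab : ∀ g ∈ Γ, ∀ x ∈ Submodule.span ℂ {y : A | ∃ g₁ ∈ Γ, ∃ g₂ ∈ Γ, y = g₁ * a * g₂},
      g * x ∈ Submodule.span ℂ {y : A | ∃ g₁ ∈ Γ, ∃ g₂ ∈ Γ, y = g₁ * a * g₂} := by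
    intro g hg x hx
    induction hx using Submodule.span_induction with
    | mem x h =>
      obtain ⟨g₁, hg₁, g₂, hg₂, rfl⟩ := h
      exact Submodule.subset_span ⟨g * g₁, mul_mem hg hg₁, g₂, hg₂, by simp only [mul_assoc]⟩
    | zero => rw [mul_zero]; exact zero_mem _
    | add x y _ _ hx hy => rw [mul_add]; exact add_mem hx hy
    | smul c x _ hx => rw [mul_smul_comm]; exact Submodule.smul_mem _ _ hx
  have hbi : biSpan Γ a = (T : Set A) := by
    apply Set.Subset.antisymm
    · intro x hx
      induction hx using Submodule.span_induction with
      | mem x h =>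
        obtain ⟨g₁, hg₁, g₂, hg₂, rfl⟩ := h
        obtain ⟨p, rfl⟩ := (hΓ g₁).mp hg₁
        have : aeval u p * a * g₂ = p • (a * g₂) := by rw [hsmul, mul_assoc]
        rw [this]
        exact Submodule.smul_mem _ _ (Submodule.subset_span ⟨g₂, hg₂, rfl⟩)
      | zero => exact zero_mem T
      | add x y _ _ hx hy => exact add_mem hx hy
      | smul c x _ hx => rw [hsmulC]; exact Submodule.smul_mem _ _ hx
    · intro x hx
      induction hx using Submodule.span_induction with
      | mem x h =>
        obtain ⟨g, hg, rfl⟩ := h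
        exact Submodule.subset_span ⟨1, one_mem Γ, g, hg, by rw [one_mul]⟩
      | zero => exact zero_mem _
      | add x y _ _ hx hy => exact add_mem hx hy
      | smul p x _ hx =>
        rw [hsmul]
        exact hstab _ ((hΓ _).mpr ⟨p, rfl⟩) _ hx
  have hleft : leftSpan Γ (↑S : Set A) = (Submodule.span ℂ[X] (↑S : Set A) : Set A) := by
    apply Set.Subset.antisymm
    · intro x hx
      induction hx using Submodule.span_induction with
      | mem x h =>
        obtain ⟨g, hg, y, hy, rfl⟩ := h
        obtain ⟨p, rfl⟩ := (hΓ g).mp hg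
        rw [← hsmul]
        exact Submodule.smul_mem _ _ (Submodule.subset_span hy)
      | zero => exact zero_mem (Submodule.span ℂ[X] (↑S : Set A))
      | add x y _ _ hx hy => exact add_mem hx hy
      | smul c x _ hx => rw [hsmulC]; exact Submodule.smul_mem _ _ hx
    · intro x hx
      have hstab2 : ∀ (p : ℂ[X]), ∀ x ∈ Submodule.span ℂ {y : A | ∃ g ∈ Γ, ∃ z ∈ (↑S : Set A), y = g * z},
          aeval u p * x ∈ Submodule.span ℂ {y : A | ∃ g ∈ Γ, ∃ z ∈ (↑S : Set A), y = g * z} := by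
        intro p x hx
        induction hx using Submodule.span_induction with
        | mem x h =>
          obtain ⟨g, hg, z, hz, rfl⟩ := h
          exact Submodule.subset_span
            ⟨aeval u p * g, mul_mem ((hΓ _).mpr ⟨p, rfl⟩) hg, z, hz, by rw [mul_assoc]⟩
        | zero => rw [mul_zero]; exact zero_mem _
        | add x y _ _ hx hy => rw [mul_add]; exact add_mem hx hy
        | smul c x _ hx => rw [mul_smul_comm]; exact Submodule.smul_mem _ _ hx
      induction hx using Submodule.span_induction with
      | mem x h =>
        exact Submodule.subset_span ⟨1, one_mem Γ, x, h, by rw [one_mul]⟩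
      | zero => exact zero_mem _
      | add x y _ _ hx hy => exact add_mem hx hy
      | smul p x _ hx => rw [hsmul]; exact hstab2 p _ hx
  refine ⟨S, ?_, ?_⟩
  · intro s hs
    rw [hbi, ← hS]
    exact Submodule.subset_span hs
  · rw [hbi, ← hS]
    exact hleft.symm

end main

section opstuff
variable {A : Type} [Ring A] [Algebra ℂ A]
open MulOpposite

lemma op_mem_adjoin {s : Set A} {x : A} (hx : x ∈ Algebra.adjoin ℂ s) :
    op x ∈ Algebra.adjoin ℂ (op '' s) := by
  induction hx using Algebra.adjoin_induction with
  | mem y hy => exact Algebra.subset_adjoin ⟨y, hy, rfl⟩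
  | algebraMap r =>
    rw [← MulOpposite.algebraMap_apply]
    exact Subalgebra.algebraMap_mem _ r
  | add x y _ _ hx hy => rw [op_add]; exact add_mem hx hy
  | mul x y _ _ hx hy => rw [op_mul]; exact mul_mem hy hx

lemma unop_mem_adjoin {s : Set Aᵐᵒᵖ} {x : Aᵐᵒᵖ} (hx : x ∈ Algebra.adjoin ℂ s) :
    unop x ∈ Algebra.adjoin ℂ (unop '' s) := by
  induction hx using Algebra.adjoin_induction with
  | mem y hy => exact Algebra.subset_adjoin ⟨y, hy, rfl⟩
  | algebraMap r =>
    rw [MulOpposite.algebraMap_apply, unop_op]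
    exact Subalgebra.algebraMap_mem _ r
  | add x y _ _ hx hy => rw [unop_add]; exact add_mem hx hy
  | mul x y _ _ hx hy => rw [unop_mul]; exact mul_mem hy hx

lemma mem_span_op_iff {s : Set A} {t : Set Aᵐᵒᵖ} (hst : ∀ x : A, x ∈ s ↔ op x ∈ t)
    (x : A) : x ∈ Submodule.span ℂ s ↔ op x ∈ Submodule.span ℂ t := by
  have ht : t = ⇑(opLinearEquiv ℂ (M := A)) '' s := by
    ext z
    simp only [MulOpposite.coe_opLinearEquiv]
    constructor
    · intro hz
      refine ⟨unop z, (hst (unop z)).mpr ?_, rfl⟩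
      simpa using hz
    · rintro ⟨y, hy, rfl⟩
      exact (hst y).mp hy
  constructor
  · intro h
    rw [ht, ← LinearEquiv.coe_coe, ← Submodule.map_span]
    exact Submodule.mem_map_of_mem h
  · intro h
    rw [ht, ← LinearEquiv.coe_coe, ← Submodule.map_span] at h
    obtain ⟨y, hy, hyx⟩ := h
    have : y = x := op_injective (by simpa using hyx)
    rwa [← this]

theorem right_fg (u v w : A)
    (hgen : ∀ a : A, a ∈ Algebra.adjoin ℂ ({u, v, w} : Set A))
    (hvu : u * v ∈ Submodule.span ℂ ({v * u, w * u, v, w, 1} : Set A))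
    (hwu : u * w ∈ Submodule.span ℂ ({v * u, w * u, v, w, 1} : Set A)) (a : A) :
    ∃ S : Finset A, ↑S ⊆ biSpan (Algebra.adjoin ℂ {u}) a ∧
      biSpan (Algebra.adjoin ℂ {u}) a = rightSpan (Algebra.adjoin ℂ {u}) ↑S := by
  classical
  have hgen' : ∀ b : Aᵐᵒᵖ, b ∈ Algebra.adjoin ℂ ({op u, op v, op w} : Set Aᵐᵒᵖ) := by
    intro b
    have := op_mem_adjoin (hgen (unop b))
    simpa [Set.image_insert_eq] using this
  have hset5 : ∀ x : A, x ∈ ({v * u, w * u, v, w, 1} : Set A) ↔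
      op x ∈ ({op u * op v, op u * op w, op v, op w, 1} : Set Aᵐᵒᵖ) := by
    intro x
    simp only [Set.mem_insert_iff, Set.mem_singleton_iff, ← op_mul, ← op_one, op_inj]
  have hvu' : op v * op u ∈
      Submodule.span ℂ ({op u * op v, op u * op w, op v, op w, 1} : Set Aᵐᵒᵖ) := by
    rw [← op_mul]
    exact (mem_span_op_iff hset5 (u * v)).mp hvu
  have hwu' : op w * op u ∈
      Submodule.span ℂ ({op u * op v, op u * op w, op v, op w, 1} : Set Aᵐᵒᵖ) := by
    rw [← op_mul]
    exact (mem_span_op_iff hset5 (u * w)).mp hwu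
  obtain ⟨S, hsub, heq⟩ := left_fg (op u) (op v) (op w) hgen' hvu' hwu' (op a)
  have hGamma : ∀ g : A, g ∈ Algebra.adjoin ℂ ({u} : Set A) ↔
      op g ∈ Algebra.adjoin ℂ ({op u} : Set Aᵐᵒᵖ) := by
    intro g
    constructor
    · intro h
      simpa [Set.image_singleton] using op_mem_adjoin (s := {u}) h
    · intro h
      simpa [Set.image_singleton] using unop_mem_adjoin (s := {op u}) h
  have hbi : ∀ x : A, x ∈ biSpan (Algebra.adjoin ℂ {u}) a ↔
      op x ∈ biSpan (Algebra.adjoin ℂ {op u}) (op a) := by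
    intro x
    apply mem_span_op_iff
    intro y
    constructor
    · rintro ⟨g₁, hg₁, g₂, hg₂, rfl⟩
      exact ⟨op g₂, (hGamma g₂).mp hg₂, op g₁, (hGamma g₁).mp hg₁,
        by simp [op_mul, mul_assoc]⟩
    · rintro ⟨g₁, hg₁, g₂, hg₂, hy⟩
      refine ⟨unop g₂, (hGamma _).mpr (by simpa using hg₂),
        unop g₁, (hGamma _).mpr (by simpa using hg₁), ?_⟩
      apply op_injective
      simp [hy, op_mul, mul_assoc]
  have hright : ∀ x : A, x ∈ rightSpan (Algebra.adjoin ℂ {u}) (↑(S.image unop) : Set A) ↔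
      op x ∈ leftSpan (Algebra.adjoin ℂ {op u}) (↑S : Set Aᵐᵒᵖ) := by
    intro x
    apply mem_span_op_iff
    intro y
    constructor
    · rintro ⟨g, hg, z, hz, rfl⟩
      rw [Finset.coe_image] at hz
      obtain ⟨z', hz', rfl⟩ := hz
      exact ⟨op g, (hGamma g).mp hg, z', hz', by simp [op_mul]⟩
    · rintro ⟨g, hg, z, hz, hy⟩
      refine ⟨unop g, (hGamma _).mpr (by simpa using hg), unop z, ?_, ?_⟩
      · rw [Finset.coe_image]
        exact ⟨z, hz, rfl⟩
      · apply op_injective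
        simp [hy, op_mul]
  refine ⟨S.image unop, ?_, ?_⟩
  · intro x hx
    rw [Finset.coe_image] at hx
    obtain ⟨z, hz, rfl⟩ := hx
    refine (hbi (unop z)).mpr ?_
    rw [op_unop]
    exact hsub hz
  · ext x
    constructor
    · intro h
      exact (hright x).mpr (heq ▸ (hbi x).mp h)
    · intro h
      exact (hbi x).mpr (heq.symm ▸ (hright x).mp h)

end opstuff

end HCProof
end HCmain

open KleinD in
/-- `ℂ[u]` is a Harish-Chandra subalgebra of `D(q)`: for every
`a ∈ D(q)`, the bimodule `ℂ[u]·a·ℂ[u]` is finitely generated as a left and as a right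
`ℂ[u]`-module. -/
theorem statement12 (q p₀ p₁ : Polynomial ℂ) (hq : 4 ≤ q.natDegree)
    (hp : pCond q p₀ p₁) :
    IsHarishChandraSubalgebra (Algebra.adjoin ℂ {uD q p₀ p₁}) := by
  intro a
  set u : Dq q p₀ p₁ := uD q p₀ p₁ with hu
  set v : Dq q p₀ p₁ := vD q p₀ p₁ with hv
  set w : Dq q p₀ p₁ := wD q p₀ p₁ with hw
  have r1 : u * v - v * u = 2 * w + v := by
    have key := RingQuot.mkAlgHom_rel ℂ (DqRel.rel1 (q := q) (p₀ := p₀) (p₁ := p₁))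
    simp only [map_sub, map_mul, map_add, map_ofNat] at key
    exact key
  have r2 : u * w - w * u = 2 * v * u + w + algebraMap ℂ (Dq q p₀ p₁) (rho q) := by
    have key := RingQuot.mkAlgHom_rel ℂ (DqRel.rel2 (q := q) (p₀ := p₀) (p₁ := p₁))
    simp only [map_sub, map_mul, map_add, map_ofNat, AlgHom.commutes] at key
    exact key
  have hgen : ∀ b : Dq q p₀ p₁, b ∈ Algebra.adjoin ℂ ({u, v, w} : Set (Dq q p₀ p₁)) := by
    intro b
    obtain ⟨x, rfl⟩ := RingQuot.mkAlgHom_surjective ℂ (DqRel q p₀ p₁) b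
    have hx : x ∈ Algebra.adjoin ℂ (Set.range (FreeAlgebra.ι ℂ (X := Fin 3))) := by
      rw [FreeAlgebra.adjoin_range_ι]; trivial
    induction hx using Algebra.adjoin_induction with
    | mem y hy =>
      obtain ⟨i, rfl⟩ := hy
      fin_cases i
      · exact Algebra.subset_adjoin (Set.mem_insert_iff.mpr (Or.inl rfl))
      · exact Algebra.subset_adjoin (Set.mem_insert_iff.mpr (Or.inr
          (Set.mem_insert_iff.mpr (Or.inl rfl))))
      · exact Algebra.subset_adjoin (Set.mem_insert_iff.mpr (Or.inr
          (Set.mem_insert_iff.mpr (Or.inr rfl))))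
    | algebraMap r =>
      rw [AlgHom.commutes]
      exact Subalgebra.algebraMap_mem _ r
    | add x y _ _ hx hy => rw [map_add]; exact add_mem hx hy
    | mul x y _ _ hx hy => rw [map_mul]; exact mul_mem hx hy
  have two_smul' : ∀ x : Dq q p₀ p₁, (2 : Dq q p₀ p₁) * x = (2 : ℂ) • x := by
    intro x
    rw [Algebra.smul_def, map_ofNat]
  have halg : ∀ c : ℂ, algebraMap ℂ (Dq q p₀ p₁) c = c • (1 : Dq q p₀ p₁) := by
    intro c
    rw [Algebra.algebraMap_eq_smul_one]
  -- left-side relation memberships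
  have hvu : v * u ∈ Submodule.span ℂ ({u * v, u * w, v, w, 1} : Set (Dq q p₀ p₁)) := by
    have hvu_eq : v * u = u * v - (2 * w + v) := by rw [← r1]; abel
    rw [hvu_eq, two_smul']
    refine sub_mem (Submodule.subset_span (by simp)) (add_mem ?_ ?_)
    · exact Submodule.smul_mem _ _ (Submodule.subset_span (by simp))
    · exact Submodule.subset_span (by simp)
  have hwu : w * u ∈ Submodule.span ℂ ({u * v, u * w, v, w, 1} : Set (Dq q p₀ p₁)) := by
    have hwu_eq : w * u = u * w - (2 * v * u + w + algebraMap ℂ (Dq q p₀ p₁) (rho q)) := by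
      rw [← r2]; abel
    rw [hwu_eq, mul_assoc, two_smul', halg]
    refine sub_mem (Submodule.subset_span (by simp)) (add_mem (add_mem ?_ ?_) ?_)
    · exact Submodule.smul_mem _ _ hvu
    · exact Submodule.subset_span (by simp)
    · exact Submodule.smul_mem _ _ (Submodule.subset_span (by simp))
  -- right-side relation memberships
  have hvu' : u * v ∈ Submodule.span ℂ ({v * u, w * u, v, w, 1} : Set (Dq q p₀ p₁)) := by
    have huv_eq : u * v = v * u + (2 * w + v) := by rw [← r1]; abel
    rw [huv_eq, two_smul']
    refine add_mem (Submodule.subset_span (by simp)) (add_mem ?_ ?_)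
    · exact Submodule.smul_mem _ _ (Submodule.subset_span (by simp))
    · exact Submodule.subset_span (by simp)
  have hwu' : u * w ∈ Submodule.span ℂ ({v * u, w * u, v, w, 1} : Set (Dq q p₀ p₁)) := by
    have huw_eq : u * w = w * u + (2 * v * u + w + algebraMap ℂ (Dq q p₀ p₁) (rho q)) := by
      rw [← r2]; abel
    rw [huw_eq, mul_assoc, two_smul', halg]
    refine add_mem (Submodule.subset_span (by simp)) (add_mem (add_mem ?_ ?_) ?_)
    · exact Submodule.smul_mem _ _ (Submodule.subset_span (by simp))
    · exact Submodule.subset_span (by simp)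
    · exact Submodule.smul_mem _ _ (Submodule.subset_span (by simp))
  exact ⟨HCProof.left_fg u v w hgen hvu hwu a, HCProof.right_fg u v w hgen hvu' hwu' a⟩
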